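/- Exponential convergence of Clenshaw–Curtis quadrature: if f: [−1,1] → ℝ extends to an analytic function on a Bernstein ellipse with parameter ρ > 1 and is bounded by M there, then the N-point Clenshaw–Curtis quadrature approximation I_N(f) to ∫_{−1}^{1} f satisfies |I_N(f) − ∫_{−1}^{1} f| ≤ C M ρ^{−N} for some constant C depending only on ρ. -/

import Mathlib

open MeasureTheory

open Complex Set intervalIntegral

instance : Fact (0 < 2*Real.pi) := ⟨Real.two_pi_pos⟩

noncomputable def F (k : ℤ) (h : ℂ → ℂ) : ℂ → ℂ := fun w => w ^ (-(k+1)) * h w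

lemma unit_circle_eq (h : ℂ → ℂ) (Φ : C(AddCircle (2*Real.pi), ℂ))
    (hΦ : ∀ θ : ℝ, Φ (θ : AddCircle (2*Real.pi)) = h (Complex.exp (θ * I)))
    (k : ℤ) :
    (∮ z in C(0, 1), F k h z) = I * ((2*Real.pi : ℝ) • fourierCoeff (⇑Φ) k) := by
  have h1 : fourierCoeff (⇑Φ) k
      = (1/(2*Real.pi) : ℝ) • ∫ x in (0:ℝ)..0+2*Real.pi, fourier (-k) (x : AddCircle (2*Real.pi)) • Φ x :=
    fourierCoeff_eq_intervalIntegral _ k 0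
  have h2 : (∮ z in C(0, 1), F k h z)
      = ∫ θ in (0:ℝ)..2*Real.pi, I * (fourier (-k) (θ : AddCircle (2*Real.pi)) • Φ θ) := by
    rw [circleIntegral]
    congr 1
    ext θ
    rw [deriv_circleMap, hΦ θ, fourier_coe_apply, circleMap_zero]
    have hπ : (Real.pi : ℂ) ≠ 0 := by
      exact_mod_cast Real.pi_ne_zero
    have harg : 2 * (Real.pi:ℂ) * I * ((-k : ℤ) : ℂ) * (θ:ℝ) / ((2*Real.pi : ℝ) : ℂ)
        = ((-k : ℤ) : ℂ) * ((θ:ℂ) * I) := by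
      push_cast
      field_simp
    push_cast at harg ⊢
    rw [harg]
    simp only [F, one_mul, smul_eq_mul, zpow_neg, ← Complex.exp_int_mul]
    push_cast
    simp only [← Complex.exp_neg]
    have hmul : cexp ((θ:ℂ) * I) * cexp (-(((k:ℂ) + 1) * ((θ:ℂ) * I))) = cexp (-(k:ℂ) * ((θ:ℂ) * I)) := by
      rw [← Complex.exp_add]; congr 1; ring
    linear_combination I * h (cexp ((θ:ℂ) * I)) * hmul
  rw [h2, intervalIntegral.integral_const_mul, h1, smul_smul]
  have : (2*Real.pi) * (1/(2*Real.pi)) = 1 := by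
    field_simp
  rw [this, one_smul]
  norm_num

open Metric in
lemma coeff_bound (ρ : ℝ) (hρ : 1 < ρ) (M : ℝ) (h : ℂ → ℂ)
    (hd : DifferentiableOn ℂ h {w : ℂ | ρ⁻¹ ≤ ‖w‖ ∧ ‖w‖ ≤ ρ})
    (hb : ∀ w : ℂ, ρ⁻¹ ≤ ‖w‖ → ‖w‖ ≤ ρ → ‖h w‖ ≤ M)
    (Φ : C(AddCircle (2*Real.pi), ℂ))
    (hΦ : ∀ θ : ℝ, Φ (θ : AddCircle (2*Real.pi)) = h (Complex.exp (θ * I)))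
    (k : ℤ) : ‖fourierCoeff (⇑Φ) k‖ ≤ M * ρ ^ (-(k.natAbs : ℤ)) := by
  have hρ0 : (0:ℝ) < ρ := lt_trans one_pos hρ
  have hρi : (0:ℝ) < ρ⁻¹ := inv_pos.mpr hρ0
  have hρi1 : ρ⁻¹ ≤ 1 := by
    rw [inv_le_one_iff₀]; right; exact hρ.le
  set A : Set ℂ := {w : ℂ | ρ⁻¹ ≤ ‖w‖ ∧ ‖w‖ ≤ ρ} with hA
  have hFd : DifferentiableOn ℂ (F k h) A := by
    intro w hw
    have hw0 : w ≠ 0 := by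
      intro h0
      rw [h0] at hw
      simp only [hA, Set.mem_setOf_eq, norm_zero] at hw
      linarith [hw.1]
    exact ((differentiableAt_zpow.mpr (Or.inl hw0)).differentiableWithinAt).mul (hd w hw)
  have hbnd : ∀ t : ℝ, ρ⁻¹ ≤ t → t ≤ ρ →
      ‖∮ z in C(0, t), F k h z‖ ≤ 2 * Real.pi * t * (t ^ (-(k+1)) * M) := by
    intro t h1 h2
    have ht0 : 0 < t := lt_of_lt_of_le hρi h1
    refine circleIntegral.norm_integral_le_of_norm_le_const ht0.le ?_
    intro z hz
    have hzabs : ‖z‖ = t := by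
      simpa using (mem_sphere_zero_iff_norm.mp hz)
    have : ‖F k h z‖ = t ^ (-(k+1)) * ‖h z‖ := by
      simp [F, norm_mul, norm_zpow, hzabs]
    rw [this]
    exact mul_le_mul_of_nonneg_left (hb z (hzabs ▸ h1) (hzabs ▸ h2)) (zpow_nonneg ht0.le _)
  have hsub : ∀ z ∈ (ball (0:ℂ) ρ \ closedBall 0 ρ⁻¹), DifferentiableAt ℂ (F k h) z := by
    intro z hz
    rw [Set.mem_diff, mem_ball_zero_iff, mem_closedBall_zero_iff, not_le] at hz
    refine hFd.differentiableAt (Filter.mem_of_superset (IsOpen.mem_nhds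
      (isOpen_ball.sdiff Metric.isClosed_closedBall) (by
        rw [Set.mem_diff, mem_ball_zero_iff, mem_closedBall_zero_iff, not_le]; exact hz)) ?_)
    intro w hw
    rw [Set.mem_diff, mem_ball_zero_iff, mem_closedBall_zero_iff, not_le] at hw
    exact ⟨hw.2.le, hw.1.le⟩
  have hcont : ContinuousOn (F k h) (closedBall (0:ℂ) ρ \ ball 0 ρ⁻¹) := by
    refine hFd.continuousOn.mono ?_
    intro w hw
    rw [Set.mem_diff, mem_ball_zero_iff, mem_closedBall_zero_iff, not_lt] at hw
    exact ⟨hw.2, hw.1⟩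
  have key := unit_circle_eq h Φ hΦ k
  have hnorm : ‖(∮ z in C(0, 1), F k h z)‖ = 2 * Real.pi * ‖fourierCoeff (⇑Φ) k‖ := by
    rw [key, norm_mul, Complex.norm_I, one_mul, norm_smul, Real.norm_eq_abs,
      abs_of_pos Real.two_pi_pos]
  rcases le_or_gt 0 k with hk | hk
  · have hdef : (∮ z in C(0, ρ), F k h z) = (∮ z in C(0, 1), F k h z) :=
      Complex.circleIntegral_eq_of_differentiable_on_annulus_off_countable
        one_pos hρ.le Set.countable_empty
        (hcont.mono (Set.diff_subset_diff_right (ball_subset_ball hρi1)))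
        (fun z hz => hsub z
          (Set.diff_subset_diff_right (closedBall_subset_closedBall hρi1) hz.1))
    have hB := hbnd ρ (le_trans hρi1 hρ.le) le_rfl
    rw [hdef, hnorm] at hB
    rw [show 2*Real.pi*ρ*(ρ ^ (-(k+1)) * M) = 2*Real.pi*(ρ*(ρ ^ (-(k+1)) * M)) from by ring] at hB
    have h2 := le_of_mul_le_mul_left hB Real.two_pi_pos
    calc ‖fourierCoeff (⇑Φ) k‖ ≤ ρ * (ρ ^ (-(k+1)) * M) := h2
      _ = M * ρ ^ (-(k.natAbs : ℤ)) := by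
        rw [show (-(k.natAbs : ℤ)) = -k from by omega,
          show ρ * (ρ ^ (-(k+1)) * M) = M * (ρ ^ (1:ℤ) * ρ ^ (-(k+1))) from by
            rw [zpow_one]; ring,
          ← zpow_add₀ hρ0.ne']
        norm_num
  · have hdef : (∮ z in C(0, 1), F k h z) = (∮ z in C(0, ρ⁻¹), F k h z) :=
      Complex.circleIntegral_eq_of_differentiable_on_annulus_off_countable
        hρi hρi1 Set.countable_empty
        (hcont.mono (Set.diff_subset_diff_left (closedBall_subset_closedBall hρ.le)))
        (fun z hz => hsub z (Set.diff_subset_diff_left (ball_subset_ball hρ.le) hz.1))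
    have hB := hbnd ρ⁻¹ le_rfl (le_trans hρi1 hρ.le)
    rw [← hdef, hnorm] at hB
    rw [show 2*Real.pi*ρ⁻¹*(ρ⁻¹ ^ (-(k+1)) * M) = 2*Real.pi*(ρ⁻¹*(ρ⁻¹ ^ (-(k+1)) * M)) from by
      ring] at hB
    have h2 := le_of_mul_le_mul_left hB Real.two_pi_pos
    calc ‖fourierCoeff (⇑Φ) k‖ ≤ ρ⁻¹ * (ρ⁻¹ ^ (-(k+1)) * M) := h2
      _ = M * ρ ^ (-(k.natAbs : ℤ)) := by
        rw [show (-(k.natAbs : ℤ)) = k from by omega,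
          show ρ⁻¹ * (ρ⁻¹ ^ (-(k+1)) * M) = M * (ρ⁻¹ ^ (1:ℤ) * ρ⁻¹ ^ (-(k+1))) from by
            rw [zpow_one]; ring,
          ← zpow_add₀ (ne_of_gt hρi), inv_zpow, ← zpow_neg]
        norm_num

noncomputable section
open Real in
lemma cheb_series (ρ : ℝ) (hρ : 1 < ρ) (M : ℝ) (f : ℝ → ℝ) (g : ℂ → ℂ)
    (hg : DifferentiableOn ℂ g
      ((fun z : ℂ => (z + z⁻¹) / 2) '' {z : ℂ | 1 ≤ ‖z‖ ∧ ‖z‖ ≤ ρ}))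
    (hfg : ∀ x : ℝ, x ∈ Set.Icc (-1 : ℝ) 1 → g x = f x)
    (hb : ∀ z ∈ ((fun z : ℂ => (z + z⁻¹) / 2) ''
        {z : ℂ | 1 ≤ ‖z‖ ∧ ‖z‖ ≤ ρ}), ‖g z‖ ≤ M) :
    ∃ α : ℕ → ℝ, (∀ n : ℕ, |α n| ≤ 2 * M * ρ ^ (-(n:ℤ))) ∧
      ∀ θ : ℝ, HasSum (fun n : ℕ => α n * Real.cos (n * θ)) (f (Real.cos θ)) := by
  have hρ0 : (0:ℝ) < ρ := lt_trans one_pos hρ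
  have hρi : (0:ℝ) < ρ⁻¹ := inv_pos.mpr hρ0
  set S := ((fun z : ℂ => (z + z⁻¹) / 2) ''
    {z : ℂ | 1 ≤ ‖z‖ ∧ ‖z‖ ≤ ρ}) with hS
  -- the Joukowski image facts
  have hJmem : ∀ w : ℂ, ρ⁻¹ ≤ ‖w‖ → ‖w‖ ≤ ρ → (w + w⁻¹)/2 ∈ S := by
    intro w h1 h2
    rcases le_or_gt 1 (‖w‖) with hc | hc
    · exact ⟨w, ⟨hc, h2⟩, rfl⟩
    · have hw0 : w ≠ 0 := by
        intro h0
        rw [h0] at h1; simp only [norm_zero] at h1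
        linarith
      refine ⟨w⁻¹, ⟨?_, ?_⟩, ?_⟩
      · rw [norm_inv]
        exact (one_le_inv₀ (norm_pos_iff.mpr hw0)).mpr hc.le
      · rw [norm_inv]
        calc (‖w‖)⁻¹ ≤ (ρ⁻¹)⁻¹ := inv_anti₀ (by positivity) h1
          _ = ρ := inv_inv ρ
      · simp only [inv_inv]; ring
  set h : ℂ → ℂ := fun w => g ((w + w⁻¹)/2) with hh
  have hd : DifferentiableOn ℂ h {w : ℂ | ρ⁻¹ ≤ ‖w‖ ∧ ‖w‖ ≤ ρ} := by
    intro w hw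
    have hw0 : w ≠ 0 := by
      intro h0; rw [h0] at hw
      simp only [Set.mem_setOf_eq, norm_zero] at hw
      linarith [hw.1]
    have hJd : DifferentiableWithinAt ℂ (fun w : ℂ => (w + w⁻¹)/2)
        {w : ℂ | ρ⁻¹ ≤ ‖w‖ ∧ ‖w‖ ≤ ρ} w :=
      (((differentiableAt_id.add (differentiableAt_inv hw0)).div_const 2)).differentiableWithinAt
    exact DifferentiableWithinAt.comp w (hg _ (hJmem w hw.1 hw.2)) hJd
      (fun z hz => hJmem z hz.1 hz.2)
  have hbh : ∀ w : ℂ, ρ⁻¹ ≤ ‖w‖ → ‖w‖ ≤ ρ → ‖h w‖ ≤ M :=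
    fun w h1 h2 => hb _ (hJmem w h1 h2)
  -- the boundary function
  set φ : ℝ → ℂ := fun θ => h (Complex.exp (θ * Complex.I)) with hφ
  have hper : Function.Periodic φ (2*Real.pi) := by
    intro θ
    simp only [hφ]
    congr 1
    push_cast
    rw [add_mul, Complex.exp_add]
    simp [Complex.exp_two_pi_mul_I]
  have habs1 : ∀ θ : ℝ, ρ⁻¹ ≤ ‖Complex.exp (θ * Complex.I)‖
      ∧ ‖Complex.exp (θ * Complex.I)‖ ≤ ρ := by
    intro θ
    rw [Complex.norm_exp_ofReal_mul_I]
    exact ⟨by rw [inv_le_one_iff₀]; right; exact hρ.le, hρ.le⟩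
  have hφcont : Continuous φ := by
    have : Continuous (h ∘ fun θ : ℝ => Complex.exp ((θ:ℂ) * Complex.I)) :=
      hd.continuousOn.comp_continuous
        (Complex.continuous_exp.comp (Complex.continuous_ofReal.mul continuous_const))
        (fun θ => ⟨(habs1 θ).1, (habs1 θ).2⟩)
    exact this
  set Φ : C(AddCircle (2*Real.pi), ℂ) := ⟨hper.lift, continuous_coinduced_dom.mpr hφcont⟩ with hΦdef
  have hΦ : ∀ θ : ℝ, Φ (θ : AddCircle (2*Real.pi)) = h (Complex.exp (θ * Complex.I)) :=
    fun θ => hper.lift_coe θ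
  set c : ℤ → ℂ := fourierCoeff (⇑Φ) with hc
  have hck : ∀ k : ℤ, ‖c k‖ ≤ M * ρ ^ (-(k.natAbs : ℤ)) :=
    fun k => coeff_bound ρ hρ M h hd hbh Φ hΦ k
  have hM0 : 0 ≤ M := le_trans (norm_nonneg (c 0)) (by simpa using hck 0)
  -- summability
  have hgeo : Summable (fun n : ℕ => M * ρ ^ (-(n:ℤ))) := by
    have : Summable (fun n : ℕ => M * (ρ⁻¹) ^ n) :=
      (summable_geometric_of_lt_one hρi.le (by
        rw [inv_lt_one_iff₀]; right; exact hρ)).mul_left M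
    refine this.congr (fun n => ?_)
    rw [zpow_neg, zpow_natCast, inv_pow]
  have hsummable : Summable c := by
    refine Summable.of_norm_bounded (g := fun k : ℤ => M * ρ ^ (-(k.natAbs : ℤ))) ?_ hck
    refine Summable.of_nat_of_neg ?_ ?_
    · exact hgeo.congr (fun n => by simp)
    · exact hgeo.congr (fun n => by simp)
  -- pointwise sums
  have hptC : ∀ θ : ℝ, HasSum (fun k : ℤ => c k * Complex.exp (k * (θ * Complex.I))) (φ θ) := by
    intro θ
    have := has_pointwise_sum_fourier_series_of_summable hsummable (θ : AddCircle (2*Real.pi))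
    rw [hΦ θ] at this
    refine this.congr_fun (fun k => ?_)
    rw [fourier_coe_apply, smul_eq_mul]
    congr 2
    have hπ : (Real.pi : ℂ) ≠ 0 := by
      exact_mod_cast Real.pi_ne_zero
    push_cast
    field_simp
  have hφeven : ∀ θ : ℝ, φ (-θ) = φ θ := by
    intro θ
    have hw : Complex.exp ((↑(-θ):ℂ) * Complex.I) = (Complex.exp ((θ:ℂ) * Complex.I))⁻¹ := by
      push_cast
      rw [← Complex.exp_neg]
      ring_nf
    simp only [hφ, hh, hw, inv_inv]
    congr 1
    ring
  have hptCos : ∀ θ : ℝ, HasSum (fun k : ℤ => c k * Complex.cos (k * θ)) (φ θ) := by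
    intro θ
    have h1 := hptC θ
    have h2 := hptC (-θ)
    rw [hφeven θ] at h2
    have h3 := (h1.add h2).div_const 2
    rw [show (φ θ + φ θ)/2 = φ θ from by ring] at h3
    refine h3.congr_fun (fun k => ?_)
    rw [Complex.cos]
    push_cast
    ring_nf
  -- fold into ℕ sums
  set a : ℕ → ℂ := fun n => if n = 0 then c 0 else c n + c (-(n:ℤ)) with ha
  have hptNat : ∀ θ : ℝ, HasSum (fun n : ℕ => a n * Complex.cos (n * θ)) (φ θ) := by
    intro θ
    have H := (hptCos θ).nat_add_neg
    have H2 := H.update 0 (c 0)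
    simp only [Nat.cast_zero, Int.cast_zero, neg_zero, zero_mul, Complex.cos_zero,
      mul_one] at H2
    rw [show c 0 - (c 0 + c 0) + (φ θ + c 0) = φ θ from by ring] at H2
    refine H2.congr_fun (fun n => ?_)
    rcases Nat.eq_zero_or_pos n with rfl | hn
    · simp [Function.update_self, ha]
    · rw [Function.update_of_ne (by omega : n ≠ 0)]
      simp only [ha, if_neg (by omega : ¬ n = 0)]
      push_cast
      rw [neg_mul, Complex.cos_neg]
      ring
  refine ⟨fun n => (a n).re, ?_, ?_⟩
  · intro n
    have h1 : |(a n).re| ≤ ‖a n‖ := Complex.abs_re_le_norm _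
    refine h1.trans ?_
    rcases Nat.eq_zero_or_pos n with rfl | hn
    · simp only [ha, if_pos rfl]
      calc ‖c 0‖ ≤ M * ρ ^ (-(0:ℤ)) := by simpa using hck 0
        _ ≤ 2 * M * ρ ^ (-((0:ℕ):ℤ)) := by
          simp only [Nat.cast_zero, neg_zero, zpow_zero, mul_one]
          linarith
    · simp only [ha, if_neg (by omega : ¬ n = 0)]
      calc ‖c n + c (-(n:ℤ))‖ ≤ ‖c n‖ + ‖c (-(n:ℤ))‖ := norm_add_le _ _
        _ ≤ M * ρ ^ (-(((n:ℤ).natAbs):ℤ)) + M * ρ ^ (-(((-(n:ℤ)).natAbs):ℤ)) :=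
            add_le_add (hck _) (hck _)
        _ = 2 * M * ρ ^ (-(n:ℤ)) := by
          rw [show (((n:ℤ).natAbs):ℤ) = (n:ℤ) from by omega,
            show (((-(n:ℤ)).natAbs):ℤ) = (n:ℤ) from by omega]
          ring
  · intro θ
    have H := Complex.hasSum_re (hptNat θ)
    have hφre : (φ θ).re = f (Real.cos θ) := by
      have hmem : (Real.cos θ) ∈ Set.Icc (-1:ℝ) 1 :=
        ⟨Real.neg_one_le_cos θ, Real.cos_le_one θ⟩
      have harg : (Complex.exp ((θ:ℂ) * Complex.I)
          + (Complex.exp ((θ:ℂ) * Complex.I))⁻¹)/2 = ((Real.cos θ : ℝ):ℂ) := by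
        rw [← Complex.exp_neg, Complex.ofReal_cos, Complex.cos]
        ring_nf
      have : φ θ = ((f (Real.cos θ) : ℝ) : ℂ) := by
        show g ((Complex.exp ((θ:ℂ) * Complex.I)
          + (Complex.exp ((θ:ℂ) * Complex.I))⁻¹)/2) = _
        rw [harg]
        exact hfg _ hmem
      rw [this, Complex.ofReal_re]
    rw [hφre] at H
    refine H.congr_fun (fun n => ?_)
    rw [show ((n:ℂ) * (θ:ℂ)) = (((n * θ : ℝ)):ℂ) from by push_cast; ring,
      ← Complex.ofReal_cos, Complex.mul_re, Complex.ofReal_re, Complex.ofReal_im]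
    ring
end


lemma fold_cos (n : ℕ) (hn : 1 ≤ n) (k j : ℕ) :
    Real.cos (((min (k % (2*n)) (2*n - k % (2*n)) : ℕ) : ℝ) * ((j:ℝ) * Real.pi / n))
      = Real.cos ((k:ℝ) * ((j:ℝ) * Real.pi / n)) := by
  have hn0 : (n:ℝ) ≠ 0 := Nat.cast_ne_zero.mpr (by omega)
  set s := k % (2*n) with hs
  have hslt : s < 2*n := Nat.mod_lt _ (by omega)
  set e := k / (2*n) with he
  have hdecomp : 2*n*e + s = k := Nat.div_add_mod k (2*n)
  have hcast : (k:ℝ) = 2*(n:ℝ)*(e:ℝ) + (s:ℝ) := by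
    exact_mod_cast (congrArg (fun m : ℕ => (m:ℝ)) hdecomp).symm
  have hks : Real.cos ((k:ℝ)*((j:ℝ)*Real.pi/n)) = Real.cos ((s:ℝ)*((j:ℝ)*Real.pi/n)) := by
    rw [show (k:ℝ)*((j:ℝ)*Real.pi/n)
        = (s:ℝ)*((j:ℝ)*Real.pi/n) + ((e*j : ℕ):ℝ) * (2*Real.pi) from by
      rw [hcast]; push_cast; field_simp; ring]
    exact Real.cos_add_nat_mul_two_pi _ _
  rcases le_or_gt s n with hsn | hsn
  · rw [min_eq_left (by omega), hks]
  · have hmin : min s (2*n - s) = 2*n - s := min_eq_right (by omega)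
    rw [hmin, hks]
    have hcast2 : ((2*n - s : ℕ):ℝ) = 2*(n:ℝ) - (s:ℝ) := by
      push_cast [Nat.cast_sub hslt.le]; ring
    rw [hcast2, show (2*(n:ℝ)-(s:ℝ))*((j:ℝ)*Real.pi/n)
        = -((s:ℝ)*((j:ℝ)*Real.pi/n)) + (j:ℕ)*(2*Real.pi) from by field_simp; ring]
    rw [Real.cos_add_nat_mul_two_pi, Real.cos_neg]


open Polynomial in
lemma cheb_T_natDegree_le (m : ℕ) : (Polynomial.Chebyshev.T ℝ (m:ℤ)).natDegree ≤ m := by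
  induction m using Nat.strong_induction_on with
  | _ m ih =>
    match m with
    | 0 => simp [Polynomial.Chebyshev.T_zero]
    | 1 => simp [Polynomial.Chebyshev.T_one]
    | (m+2) =>
      have h : ((m:ℤ)+2) = (((m+2:ℕ)):ℤ) := by push_cast; ring
      rw [← h, Polynomial.Chebyshev.T_add_two]
      refine le_trans (natDegree_sub_le _ _) ?_
      have h1 : (2 * X * Polynomial.Chebyshev.T ℝ ((m:ℤ)+1)).natDegree ≤ m + 2 := by
        refine le_trans (natDegree_mul_le) ?_
        have hc : ((m:ℤ)+1) = (((m+1:ℕ)):ℤ) := by push_cast; ring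
        rw [hc]
        have := ih (m+1) (by omega)
        have h2 : (2 * X : ℝ[X]).natDegree ≤ 1 :=
          le_trans natDegree_mul_le (by simp)
        omega
      have h3 : (Polynomial.Chebyshev.T ℝ (m:ℤ)).natDegree ≤ m + 2 :=
        le_trans (ih m (by omega)) (by omega)
      simp [h1, h3]

lemma ofReal_mem_img (ρ : ℝ) (hρ : 1 < ρ) (x : ℝ) (hx : x ∈ Set.Icc (-1:ℝ) 1) :
    ((x:ℝ):ℂ) ∈ (fun z : ℂ => (z + z⁻¹) / 2) ''
      {z : ℂ | 1 ≤ ‖z‖ ∧ ‖z‖ ≤ ρ} := by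
  refine ⟨Complex.exp ((Real.arccos x : ℂ) * Complex.I), ⟨?_, ?_⟩, ?_⟩
  · rw [Complex.norm_exp_ofReal_mul_I]
  · rw [Complex.norm_exp_ofReal_mul_I]; exact hρ.le
  · show (Complex.exp ((Real.arccos x : ℂ) * Complex.I)
      + (Complex.exp ((Real.arccos x : ℂ) * Complex.I))⁻¹) / 2 = _
    rw [← Complex.exp_neg,
      show ((x:ℝ):ℂ) = ((Real.cos (Real.arccos x) : ℝ) : ℂ) from by
        rw [Real.cos_arccos hx.1 hx.2],
      Complex.ofReal_cos, Complex.cos]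
    ring_nf

set_option maxHeartbeats 1000000 in
/-- Exponential convergence of Clenshaw–Curtis quadrature: for each `ρ > 1` there
is a constant `C` (depending only on `ρ`) such that, for every `f : ℝ → ℝ`
extending to a function `g` analytic on the Bernstein ellipse `E_ρ` (the image of
the annulus `1 ≤ |z| ≤ ρ` under `z ↦ (z + 1/z)/2`) and bounded there by `M`, and
for every `N ≥ 2` and weights making the quadrature rule at the Chebyshev nodes
`cos(jπ/(N−1))` exact for all polynomials of degree `< N`, the quadrature error
is at most `C · M · ρ^{−N}`. -/
theorem clenshaw_curtis_exponential_convergence (ρ : ℝ) (hρ : 1 < ρ) :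
    ∃ C : ℝ, 0 < C ∧
      ∀ (M : ℝ) (f : ℝ → ℝ) (g : ℂ → ℂ),
        DifferentiableOn ℂ g
          ((fun z : ℂ => (z + z⁻¹) / 2) ''
            {z : ℂ | 1 ≤ ‖z‖ ∧ ‖z‖ ≤ ρ}) →
        (∀ x : ℝ, x ∈ Set.Icc (-1 : ℝ) 1 → g x = f x) →
        (∀ z ∈ ((fun z : ℂ => (z + z⁻¹) / 2) ''
            {z : ℂ | 1 ≤ ‖z‖ ∧ ‖z‖ ≤ ρ}), ‖g z‖ ≤ M) →
        ∀ (N : ℕ), 2 ≤ N → ∀ (wt : Fin N → ℝ),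
          (∀ P : Polynomial ℝ, P.natDegree < N →
            ∑ j : Fin N, wt j * P.eval (Real.cos (j * Real.pi / (N - 1)))
              = ∫ x in (-1 : ℝ)..1, P.eval x) →
          |∑ j : Fin N, wt j * f (Real.cos (j * Real.pi / (N - 1)))
              - ∫ x in (-1 : ℝ)..1, f x|
            ≤ C * M * ρ ^ (-(N : ℤ)) := by
  have hρ0 : (0:ℝ) < ρ := lt_trans one_pos hρ
  have hρi1 : ρ⁻¹ < 1 := by rw [inv_lt_one_iff₀]; right; exact hρ
  have hρip : (0:ℝ) < 1 - ρ⁻¹ := by linarith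
  refine ⟨8 * (1 - ρ⁻¹)⁻¹, by positivity, ?_⟩
  intro M f g hg hfg hb N hN wt hexact
  obtain ⟨α, hα, hsum⟩ := cheb_series ρ hρ M f g hg hfg hb
  have hM0 : 0 ≤ M := by
    have h0 := (abs_nonneg (α 0)).trans (hα 0)
    norm_num at h0
    linarith
  set n := N - 1 with hn
  have hn1 : 1 ≤ n := by omega
  have hNn : N = n + 1 := by omega
  have hcastN : ((N:ℝ) - 1) = (n:ℝ) := by
    rw [hNn]; push_cast; ring
  set r : ℕ → ℕ := fun k => min (k % (2*n)) (2*n - k % (2*n)) with hr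
  have hrle : ∀ k, r k ≤ n := by
    intro k
    have h1 : k % (2*n) < 2*n := Nat.mod_lt _ (by omega)
    simp only [hr]
    omega
  have hrk : ∀ k, k ≤ n → r k = k := by
    intro k hk
    have h1 : k % (2*n) = k := Nat.mod_eq_of_lt (by omega)
    simp only [hr, h1]
    omega
  have hgeo0 : Summable (fun k : ℕ => (ρ⁻¹)^k) :=
    summable_geometric_of_lt_one (by positivity) hρi1
  have hzpow : ∀ k : ℕ, ρ^(-(k:ℤ)) = (ρ⁻¹)^k := by
    intro k
    rw [zpow_neg, zpow_natCast, inv_pow]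
  have hgeo : Summable (fun k : ℕ => 2*M*ρ^(-(k:ℤ))) := by
    refine ((hgeo0.mul_left (2*M)).congr (fun k => ?_))
    rw [hzpow]
  have hbound : ∀ (c : ℕ → ℝ), (∀ k, |c k| ≤ 2*M*ρ^(-(k:ℤ))) → Summable c := by
    intro c hc
    exact Summable.of_norm_bounded hgeo (by simpa [Real.norm_eq_abs] using hc)
  have hαs : Summable α := hbound α hα
  set b : ℕ → ℝ := fun m => ∑' k, if r k = m then α k else 0 with hbdef
  set q : Polynomial ℝ := ∑ m ∈ Finset.range (n+1),
    Polynomial.C (b m) * Polynomial.Chebyshev.T ℝ (m:ℤ) with hqdef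
  have habs_term : ∀ (m : ℕ) (θ : ℝ) (k : ℕ),
      |if r k = m then α k * Real.cos ((m:ℝ)*θ) else 0| ≤ 2*M*ρ^(-(k:ℤ)) := by
    intro m θ k
    by_cases h : r k = m
    · rw [if_pos h, abs_mul]
      calc |α k| * |Real.cos ((m:ℝ)*θ)| ≤ |α k| * 1 :=
            mul_le_mul_of_nonneg_left (Real.abs_cos_le_one _) (abs_nonneg _)
        _ ≤ 2*M*ρ^(-(k:ℤ)) := by rw [mul_one]; exact hα k
    · rw [if_neg h, abs_zero]
      have := (abs_nonneg (α k)).trans (hα k)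
      linarith
  have heval : ∀ θ : ℝ, q.eval (Real.cos θ) = ∑' k, α k * Real.cos ((r k : ℝ) * θ) := by
    intro θ
    have hsummand : ∀ m ∈ Finset.range (n+1),
        Summable (fun k => if r k = m then α k * Real.cos ((m:ℝ)*θ) else 0) :=
      fun m _ => hbound _ (habs_term m θ)
    rw [hqdef, Polynomial.eval_finset_sum]
    have h1 : ∀ m ∈ Finset.range (n+1),
        Polynomial.eval (Real.cos θ) (Polynomial.C (b m) * Polynomial.Chebyshev.T ℝ (m:ℤ))
          = ∑' k, (if r k = m then α k * Real.cos ((m:ℝ)*θ) else 0) := by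
      intro m _
      rw [Polynomial.eval_mul, Polynomial.eval_C, Polynomial.Chebyshev.T_real_cos]
      have hc : ((m:ℤ):ℝ) * θ = (m:ℝ) * θ := by push_cast; ring
      rw [hc, hbdef, ← tsum_mul_right]
      exact tsum_congr (fun k => by split_ifs <;> simp)
    rw [Finset.sum_congr rfl h1, ← Summable.tsum_finsetSum hsummand]
    refine tsum_congr (fun k => ?_)
    rw [Finset.sum_ite_eq (Finset.range (n+1)) (r k)
      (fun m => α k * Real.cos ((m:ℝ)*θ)),
      if_pos (Finset.mem_range.mpr (by have := hrle k; omega))]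
  have hnode : ∀ j : ℕ, q.eval (Real.cos ((j:ℝ) * Real.pi / (n:ℝ)))
      = f (Real.cos ((j:ℝ) * Real.pi / (n:ℝ))) := by
    intro j
    rw [heval]
    have hcong : ∀ k, α k * Real.cos ((r k : ℝ) * ((j:ℝ)*Real.pi/(n:ℝ)))
        = α k * Real.cos ((k:ℝ) * ((j:ℝ)*Real.pi/(n:ℝ))) := by
      intro k
      congr 1
      exact fold_cos n hn1 k j
    rw [tsum_congr hcong, (hsum ((j:ℝ)*Real.pi/(n:ℝ))).tsum_eq]
  have hdeg : q.natDegree < N := by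
    rw [hqdef, hNn]
    refine lt_of_le_of_lt
      (Polynomial.natDegree_sum_le_of_forall_le _ _ (fun m hm => ?_)) (by omega : n < n+1)
    refine le_trans (Polynomial.natDegree_C_mul_le _ _) ?_
    exact le_trans (cheb_T_natDegree_le m) (by
      have := Finset.mem_range.mp hm; omega)
  have hquad : ∑ j : Fin N, wt j * f (Real.cos (j * Real.pi / ((N:ℝ) - 1)))
      = ∫ x in (-1:ℝ)..1, q.eval x := by
    rw [← hexact q hdeg]
    refine Finset.sum_congr rfl (fun j _ => ?_)
    rw [hcastN]
    rw [hnode j]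
  -- continuity of f on [-1,1]
  have hfc : ContinuousOn f (Set.Icc (-1:ℝ) 1) := by
    have hgm : ContinuousOn (fun x : ℝ => g ((x:ℝ):ℂ)) (Set.Icc (-1:ℝ) 1) :=
      hg.continuousOn.comp Complex.continuous_ofReal.continuousOn
        (fun x hx => ofReal_mem_img ρ hρ x hx)
    have hc : ContinuousOn (fun x : ℝ => (g ((x:ℝ):ℂ)).re) (Set.Icc (-1:ℝ) 1) :=
      Complex.continuous_re.comp_continuousOn hgm
    refine hc.congr (fun x hx => ?_)
    dsimp only
    rw [hfg x hx, Complex.ofReal_re]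
  have hfint : IntervalIntegrable f volume (-1:ℝ) 1 := by
    refine ContinuousOn.intervalIntegrable ?_
    rw [Set.uIcc_of_le (by norm_num : (-1:ℝ) ≤ 1)]
    exact hfc
  have hqint : IntervalIntegrable (fun x => q.eval x) volume (-1:ℝ) 1 :=
    q.continuous.intervalIntegrable _ _
  set D : ℝ := 4*M*(1-ρ⁻¹)⁻¹ * ρ^(-(N:ℤ)) with hD
  have hsup : ∀ x ∈ Set.uIoc (-1:ℝ) 1, |q.eval x - f x| ≤ D := by
    intro x hx
    have hx' : x ∈ Set.Icc (-1:ℝ) 1 := by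
      rw [Set.uIoc_of_le (by norm_num : (-1:ℝ) ≤ 1)] at hx
      exact ⟨hx.1.le, hx.2⟩
    set θ := Real.arccos x with hθ
    have hxθ : Real.cos θ = x := Real.cos_arccos hx'.1 hx'.2
    have h1 : f x = ∑' k, α k * Real.cos ((k:ℝ)*θ) := by
      rw [← hxθ]
      exact (hsum θ).tsum_eq.symm
    have h2 : q.eval x = ∑' k, α k * Real.cos ((r k : ℝ)*θ) := by
      rw [← hxθ, heval]
    have hs1 : Summable (fun k => α k * Real.cos ((k:ℝ)*θ)) := (hsum θ).summable
    have hs2 : Summable (fun k => α k * Real.cos ((r k:ℝ)*θ)) := by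
      refine hbound _ (fun k => ?_)
      rw [abs_mul]
      calc |α k| * |Real.cos ((r k:ℝ)*θ)| ≤ |α k| * 1 :=
          mul_le_mul_of_nonneg_left (Real.abs_cos_le_one _) (abs_nonneg _)
        _ ≤ 2*M*ρ^(-(k:ℤ)) := by rw [mul_one]; exact hα k
    rw [h1, h2, ← Summable.tsum_sub hs2 hs1]
    set d : ℕ → ℝ := fun k => if k ≤ n then 0 else 4*M*ρ^(-(k:ℤ)) with hd
    have hd_nonneg : ∀ k, 0 ≤ d k := by
      intro k
      simp only [hd]
      split_ifs
      · exact le_refl 0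
      · positivity
    have hgeo4 : Summable (fun k : ℕ => 4*M*ρ^(-(k:ℤ))) := by
      refine ((hgeo0.mul_left (4*M)).congr (fun k => ?_))
      rw [hzpow]
    have hdsum : Summable d := by
      refine Summable.of_nonneg_of_le hd_nonneg (fun k => ?_) hgeo4
      simp only [hd]
      split_ifs
      · positivity
      · exact le_refl _
    have hterm : ∀ k, |α k * Real.cos ((r k:ℝ)*θ) - α k * Real.cos ((k:ℝ)*θ)| ≤ d k := by
      intro k
      by_cases hk : k ≤ n
      · rw [hrk k hk]
        simp [hd, hk]
      · simp only [hd, if_neg hk]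
        have e1 : |α k * Real.cos ((r k:ℝ)*θ)| ≤ 2*M*ρ^(-(k:ℤ)) := by
          rw [abs_mul]
          calc |α k| * |Real.cos ((r k:ℝ)*θ)| ≤ |α k| * 1 :=
              mul_le_mul_of_nonneg_left (Real.abs_cos_le_one _) (abs_nonneg _)
            _ ≤ 2*M*ρ^(-(k:ℤ)) := by rw [mul_one]; exact hα k
        have e2 : |α k * Real.cos ((k:ℝ)*θ)| ≤ 2*M*ρ^(-(k:ℤ)) := by
          rw [abs_mul]
          calc |α k| * |Real.cos ((k:ℝ)*θ)| ≤ |α k| * 1 :=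
              mul_le_mul_of_nonneg_left (Real.abs_cos_le_one _) (abs_nonneg _)
            _ ≤ 2*M*ρ^(-(k:ℤ)) := by rw [mul_one]; exact hα k
        calc |α k * Real.cos ((r k:ℝ)*θ) - α k * Real.cos ((k:ℝ)*θ)|
            ≤ |α k * Real.cos ((r k:ℝ)*θ)| + |α k * Real.cos ((k:ℝ)*θ)| := by
              simpa only [Real.norm_eq_abs] using
                norm_sub_le (α k * Real.cos ((r k:ℝ)*θ)) (α k * Real.cos ((k:ℝ)*θ))
          _ ≤ 2*M*ρ^(-(k:ℤ)) + 2*M*ρ^(-(k:ℤ)) := add_le_add e1 e2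
          _ = 4*M*ρ^(-(k:ℤ)) := by ring
    have habs_sum : Summable (fun k => |α k * Real.cos ((r k:ℝ)*θ) - α k * Real.cos ((k:ℝ)*θ)|) :=
      (hs2.sub hs1).abs
    calc |∑' k, (α k * Real.cos ((r k:ℝ)*θ) - α k * Real.cos ((k:ℝ)*θ))|
        ≤ ∑' k, |α k * Real.cos ((r k:ℝ)*θ) - α k * Real.cos ((k:ℝ)*θ)| := by
          have h' : Summable (fun k =>
              ‖α k * Real.cos ((r k:ℝ)*θ) - α k * Real.cos ((k:ℝ)*θ)‖) := by
            simpa only [Real.norm_eq_abs] using habs_sum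
          simpa only [Real.norm_eq_abs] using norm_tsum_le_tsum_norm h'
      _ ≤ ∑' k, d k := Summable.tsum_le_tsum hterm habs_sum hdsum
      _ = (∑ i ∈ Finset.range (n+1), d i) + ∑' k, d (k + (n+1)) :=
          (Summable.sum_add_tsum_nat_add (n+1) hdsum).symm
      _ = ∑' k, d (k + (n+1)) := by
          rw [Finset.sum_eq_zero, zero_add]
          intro i hi
          simp only [hd]
          rw [if_pos (by have := Finset.mem_range.mp hi; omega)]
      _ = ∑' k : ℕ, (4*M*ρ^(-(N:ℤ))) * (ρ⁻¹)^k := by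
          refine tsum_congr (fun k => ?_)
          simp only [hd]
          rw [if_neg (by omega)]
          rw [show (-((k + (n+1) : ℕ):ℤ)) = (-(N:ℤ)) + (-(k:ℤ)) from by push_cast [hNn]; ring,
            zpow_add₀ (ne_of_gt hρ0)]
          simp only [hzpow]
          ring
      _ = (4*M*ρ^(-(N:ℤ))) * (1-ρ⁻¹)⁻¹ := by
          rw [tsum_mul_left, tsum_geometric_of_lt_one (by positivity) hρi1]
      _ = D := by rw [hD]; ring
  have hintle : |∫ x in (-1:ℝ)..1, (q.eval x - f x)| ≤ D * |(1:ℝ) - (-1)| := by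
    have := intervalIntegral.norm_integral_le_of_norm_le_const
      (f := fun x => q.eval x - f x) (C := D) (a := (-1:ℝ)) (b := 1)
      (fun x hx => by rw [Real.norm_eq_abs]; exact hsup x hx)
    simpa [Real.norm_eq_abs] using this
  have hsplit : (∫ x in (-1:ℝ)..1, q.eval x) - ∫ x in (-1:ℝ)..1, f x
      = ∫ x in (-1:ℝ)..1, (q.eval x - f x) :=
    (intervalIntegral.integral_sub hqint hfint).symm
  calc |∑ j : Fin N, wt j * f (Real.cos (j * Real.pi / ((N:ℝ) - 1)))
      - ∫ x in (-1:ℝ)..1, f x|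
      = |∫ x in (-1:ℝ)..1, (q.eval x - f x)| := by rw [hquad, hsplit]
    _ ≤ D * |(1:ℝ) - (-1)| := hintle
    _ = 8 * (1 - ρ⁻¹)⁻¹ * M * ρ ^ (-(N:ℤ)) := by
        rw [hD, show |(1:ℝ) - (-1)| = 2 from by norm_num]
        ring
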